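/- Let X and V be nonempty finite types and let Z := X × V be the discrete phase space. Let π̄₁, π̄₂ : Z × Z → ℝ be everywhere positive probability densities and ρ : X → ℝ a probability density. Set m₁(z) := Σ_{z' ∈ Z} π̄₁(z', z) and m₂(z) := Σ_{z' ∈ Z} π̄₂(z, z') for z ∈ Z, and for z = (x,v) set G(x,v) := √(m₁(x,v) m₂(x,v)). Call a pair (π₁, π₂) of probability densities on Z × Z feasible if there is a function μ : Z → ℝ with Σ_{z'} π₁(z', z) = μ(z) = Σ_{z'} π₂(z, z') for all z ∈ Z, and Σ_{v ∈ V} μ(x,v) = ρ(x) for all x ∈ X. Define μ*(x,v) := ρ(x) G(x,v) / Σ_{v' ∈ V} G(x,v'), π₁*(z', z) := π̄₁(z', z) μ*(z)/m₁(z), and π₂*(z, z') := π̄₂(z, z') μ*(z)/m₂(z). Then (π₁*, π₂*) is feasible, and for every feasible pair (π₁, π₂) one has KL(π₁ ‖ π̄₁) + KL(π₂ ‖ π̄₂) ≥ KL(π₁* ‖ π̄₁) + KL(π₂* ‖ π̄₂), with equality if and only if (π₁, π₂) = (π₁*, π₂*); i.e., (π₁*, π₂*) is the unique KL-projection of (π̄₁,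 π̄₂) onto the constraint that the two couplings share a common intermediate phase-space marginal whose position marginal equals ρ. -/

import Mathlib

/-- A probability density on a finite type. -/
def IsProbDensity {S : Type*} [Fintype S] (α : S → ℝ) : Prop :=
  (∀ s, 0 ≤ α s) ∧ (∑ s, α s) = 1

/-- Relative entropy of densities on a finite type (with the convention `0 log 0 = 0`,
which holds automatically since `Real.log 0 = 0`). -/
noncomputable def KL {S : Type*} [Fintype S] (α β : S → ℝ) : ℝ :=
  ∑ s, α s * Real.log (α s / β s)

/-- KL-projection at an intermediate time point: the explicit pair `(π₁*, π₂*)` built from the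
geometric mean `G = √(m₁ m₂)` of the marginals of the priors is the unique minimizer of
`KL(π₁‖π̄₁) + KL(π₂‖π̄₂)` over pairs of couplings sharing a common intermediate phase-space
marginal whose position marginal equals `ρ`. -/
lemma log_point (a b : ℝ) (ha : 0 ≤ a) (hb : 0 ≤ b) (h0 : b = 0 → a = 0) :
    a - b ≤ a * Real.log (a / b) ∧ (a * Real.log (a / b) = a - b ↔ a = b) := by
  rcases hb.eq_or_lt with hb0 | hbpos
  · have ha0 : a = 0 := h0 hb0.symm
    rw [ha0, ← hb0]; simp
  · rcases ha.eq_or_lt with ha0 | hapos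
    · rw [← ha0]
      constructor
      · simpa using hbpos.le
      · simp only [zero_mul, zero_sub]
        constructor <;> intro h <;> [linarith; linarith]
    · have hkey : Real.log (b / a) ≤ b / a - 1 := Real.log_le_sub_one_of_pos (div_pos hbpos hapos)
      have hlog : Real.log (a / b) = - Real.log (b / a) := by
        rw [← Real.log_inv, inv_div]
      have hmul : a * (b / a) = b := by field_simp
      constructor
      · have := mul_le_mul_of_nonneg_left hkey hapos.le
        rw [hlog]; nlinarith
      · constructor
        · intro h
          by_contra hne
          have hne' : b / a ≠ 1 := by
            intro hh
            have : b = 1 * a := (div_eq_iff hapos.ne').1 hh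
            exact hne (by linarith)
          have hstrict : Real.log (b / a) < b / a - 1 :=
            Real.log_lt_sub_one_of_pos (div_pos hbpos hapos) hne'
          have := mul_lt_mul_of_pos_left hstrict hapos
          rw [hlog] at h; nlinarith
        · intro h
          rw [h, div_self (by linarith : b ≠ 0), Real.log_one]; ring

lemma gibbs {S : Type*} [Fintype S] (a b : S → ℝ) (ha : ∀ s, 0 ≤ a s) (hb : ∀ s, 0 ≤ b s)
    (h0 : ∀ s, b s = 0 → a s = 0) (hsum : ∑ s, a s = ∑ s, b s) :
    0 ≤ KL a b ∧ (KL a b = 0 ↔ a = b) := by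
  have hpt := fun s => log_point (a s) (b s) (ha s) (hb s) (h0 s)
  have hsum' : ∑ s, (a s * Real.log (a s / b s) - (a s - b s)) = KL a b := by
    rw [KL, Finset.sum_sub_distrib, Finset.sum_sub_distrib, hsum]; ring
  have hnn : ∀ s ∈ Finset.univ, (0:ℝ) ≤ a s * Real.log (a s / b s) - (a s - b s) :=
    fun s _ => by linarith [(hpt s).1]
  constructor
  · rw [← hsum']; exact Finset.sum_nonneg hnn
  · constructor
    · intro h
      have hz := (Finset.sum_eq_zero_iff_of_nonneg hnn).1 (by rw [hsum', h])
      funext s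
      have := hz s (Finset.mem_univ s)
      exact (hpt s).2.1 (by linarith)
    · intro h
      rw [h, KL]
      apply Finset.sum_eq_zero
      intro s _
      rcases eq_or_ne (b s) 0 with hs | hs
      · rw [hs]; simp
      · rw [div_self hs, Real.log_one, mul_zero]

lemma decomp_point (p pb ms m : ℝ) (hp : 0 ≤ p) (hpb : 0 < pb) (hms : 0 ≤ ms) (hm : 0 < m)
    (h0 : ms = 0 → p = 0) :
    p * Real.log (p / pb) - (pb * ms / m) * Real.log ((pb * ms / m) / pb)
        - p * Real.log (p / (pb * ms / m))
      = (p - pb * ms / m) * (Real.log ms - Real.log m) := by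
  rcases hms.eq_or_lt with h | hmspos
  · have hp0 := h0 h.symm
    rw [hp0, ← h]; simp
  · have hps : 0 < pb * ms / m := by positivity
    have hps_div : (pb * ms / m) / pb = ms / m := by field_simp
    have hlog_ps : Real.log (pb * ms / m) = Real.log pb + (Real.log ms - Real.log m) := by
      rw [Real.log_div (by positivity) hm.ne', Real.log_mul hpb.ne' hmspos.ne']; ring
    rcases hp.eq_or_lt with h' | hppos
    · rw [← h']
      simp only [zero_mul, zero_sub, zero_div, neg_sub]
      rw [hps_div, Real.log_div hmspos.ne' hm.ne']; ring
    · rw [Real.log_div hppos.ne' hpb.ne', Real.log_div hppos.ne' hps.ne', hlog_ps, hps_div,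
        Real.log_div hmspos.ne' hm.ne']
      ring

theorem kl_projection_intermediate_marginal
    (X V : Type*) [Fintype X] [Fintype V] [Nonempty X] [Nonempty V]
    (pibar₁ pibar₂ : (X × V) × (X × V) → ℝ)
    (h₁ : IsProbDensity pibar₁) (h₁pos : ∀ p, 0 < pibar₁ p)
    (h₂ : IsProbDensity pibar₂) (h₂pos : ∀ p, 0 < pibar₂ p)
    (ρ : X → ℝ) (hρ : IsProbDensity ρ)
    (m₁ m₂ G μstar : X × V → ℝ)
    (hm₁ : m₁ = fun z => ∑ z' : X × V, pibar₁ (z', z))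
    (hm₂ : m₂ = fun z => ∑ z' : X × V, pibar₂ (z, z'))
    (hG : G = fun z => Real.sqrt (m₁ z * m₂ z))
    (hμstar : μstar = fun z => ρ z.1 * G z / (∑ v' : V, G (z.1, v')))
    (pistar₁ pistar₂ : (X × V) × (X × V) → ℝ)
    (hpistar₁ : pistar₁ = fun p => pibar₁ p * μstar p.2 / m₁ p.2)
    (hpistar₂ : pistar₂ = fun p => pibar₂ p * μstar p.1 / m₂ p.1) :
    (IsProbDensity pistar₁ ∧ IsProbDensity pistar₂ ∧
      (∀ z : X × V, (∑ z' : X × V, pistar₁ (z', z)) = μstar z ∧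
        (∑ z' : X × V, pistar₂ (z, z')) = μstar z) ∧
      (∀ x : X, (∑ v : V, μstar (x, v)) = ρ x)) ∧
    ∀ π₁ π₂ : (X × V) × (X × V) → ℝ,
      IsProbDensity π₁ → IsProbDensity π₂ →
      (∃ μ : X × V → ℝ,
        (∀ z : X × V, (∑ z' : X × V, π₁ (z', z)) = μ z ∧
          (∑ z' : X × V, π₂ (z, z')) = μ z) ∧
        (∀ x : X, (∑ v : V, μ (x, v)) = ρ x)) →
      (KL pistar₁ pibar₁ + KL pistar₂ pibar₂ ≤ KL π₁ pibar₁ + KL π₂ pibar₂ ∧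
        (KL π₁ pibar₁ + KL π₂ pibar₂ = KL pistar₁ pibar₁ + KL pistar₂ pibar₂ ↔
          π₁ = pistar₁ ∧ π₂ = pistar₂)) := by
  -- basic positivity
  have hm₁pos : ∀ z, 0 < m₁ z := by
    intro z; rw [hm₁]
    exact Finset.sum_pos (fun _ _ => h₁pos _) Finset.univ_nonempty
  have hm₂pos : ∀ z, 0 < m₂ z := by
    intro z; rw [hm₂]
    exact Finset.sum_pos (fun _ _ => h₂pos _) Finset.univ_nonempty
  have hGpos : ∀ z, 0 < G z := by
    intro z; rw [hG]
    exact Real.sqrt_pos.2 (mul_pos (hm₁pos z) (hm₂pos z))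
  have hSpos : ∀ x : X, 0 < ∑ v' : V, G (x, v') :=
    fun x => Finset.sum_pos (fun _ _ => hGpos _) Finset.univ_nonempty
  have hμnn : ∀ z, 0 ≤ μstar z := by
    intro z; rw [hμstar]
    exact div_nonneg (mul_nonneg (hρ.1 _) (hGpos _).le) (hSpos _).le
  have hμrow : ∀ x : X, (∑ v : V, μstar (x, v)) = ρ x := by
    intro x
    rw [hμstar]
    simp only
    rw [← Finset.sum_div, ← Finset.mul_sum, mul_div_assoc, div_self (hSpos x).ne', mul_one]
  have hμzero : ∀ z, μstar z = 0 ↔ ρ z.1 = 0 := by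
    intro z; rw [hμstar]
    simp only
    rw [div_eq_zero_iff, mul_eq_zero]
    constructor
    · rintro ((h | h) | h)
      · exact h
      · exact absurd h (hGpos z).ne'
      · exact absurd h (hSpos z.1).ne'
    · intro h; exact Or.inl (Or.inl h)
  have hstar₁marg : ∀ z, (∑ z' : X × V, pistar₁ (z', z)) = μstar z := by
    intro z
    rw [hpistar₁]
    simp only
    rw [← Finset.sum_div, ← Finset.sum_mul]
    rw [show (∑ z' : X × V, pibar₁ (z', z)) = m₁ z from by rw [hm₁]]
    rw [mul_comm, mul_div_assoc, div_self (hm₁pos z).ne', mul_one]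
  have hstar₂marg : ∀ z, (∑ z' : X × V, pistar₂ (z, z')) = μstar z := by
    intro z
    rw [hpistar₂]
    simp only
    rw [← Finset.sum_div, ← Finset.sum_mul]
    rw [show (∑ z' : X × V, pibar₂ (z, z')) = m₂ z from by rw [hm₂]]
    rw [mul_comm, mul_div_assoc, div_self (hm₂pos z).ne', mul_one]
  have hstar₁dens : IsProbDensity pistar₁ := by
    constructor
    · intro p; rw [hpistar₁]
      exact div_nonneg (mul_nonneg (h₁pos p).le (hμnn p.2)) (hm₁pos p.2).le
    · rw [Fintype.sum_prod_type, Finset.sum_comm]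
      calc (∑ z : X × V, ∑ z' : X × V, pistar₁ (z', z))
          = ∑ z : X × V, μstar z := by
            exact Finset.sum_congr rfl fun z _ => hstar₁marg z
        _ = ∑ x : X, ∑ v : V, μstar (x, v) := by rw [Fintype.sum_prod_type]
        _ = ∑ x : X, ρ x := Finset.sum_congr rfl fun x _ => hμrow x
        _ = 1 := hρ.2
  have hstar₂dens : IsProbDensity pistar₂ := by
    constructor
    · intro p; rw [hpistar₂]
      exact div_nonneg (mul_nonneg (h₂pos p).le (hμnn p.1)) (hm₂pos p.1).le
    · rw [Fintype.sum_prod_type]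
      calc (∑ z : X × V, ∑ z' : X × V, pistar₂ (z, z'))
          = ∑ z : X × V, μstar z := by
            exact Finset.sum_congr rfl fun z _ => hstar₂marg z
        _ = ∑ x : X, ∑ v : V, μstar (x, v) := by rw [Fintype.sum_prod_type]
        _ = ∑ x : X, ρ x := Finset.sum_congr rfl fun x _ => hμrow x
        _ = 1 := hρ.2
  refine ⟨⟨hstar₁dens, hstar₂dens, fun z => ⟨hstar₁marg z, hstar₂marg z⟩, hμrow⟩, ?_⟩
  intro π₁ π₂ hπ₁ hπ₂ ⟨μ, hmarg, hrow⟩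
  -- derived facts about μ, π₁, π₂
  have hμnn' : ∀ z, 0 ≤ μ z := by
    intro z
    rw [← (hmarg z).1]
    exact Finset.sum_nonneg fun z' _ => hπ₁.1 _
  have hμzero' : ∀ z : X × V, ρ z.1 = 0 → μ z = 0 := by
    rintro ⟨x, v⟩ hx
    have hsum0 : (∑ v : V, μ (x, v)) = 0 := by rw [hrow x, hx]
    exact (Finset.sum_eq_zero_iff_of_nonneg fun v _ => hμnn' (x, v)).1 hsum0 v (Finset.mem_univ v)
  have hπ₁zero : ∀ p : (X × V) × (X × V), ρ p.2.1 = 0 → π₁ p = 0 := by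
    rintro ⟨a, b⟩ hb
    have h0 : (∑ z' : X × V, π₁ (z', b)) = 0 := by rw [(hmarg b).1]; exact hμzero' b hb
    exact (Finset.sum_eq_zero_iff_of_nonneg fun z' _ => hπ₁.1 _).1 h0 a (Finset.mem_univ a)
  have hπ₂zero : ∀ p : (X × V) × (X × V), ρ p.1.1 = 0 → π₂ p = 0 := by
    rintro ⟨a, b⟩ ha
    have h0 : (∑ z' : X × V, π₂ (a, z')) = 0 := by rw [(hmarg a).2]; exact hμzero' a ha
    exact (Finset.sum_eq_zero_iff_of_nonneg fun z' _ => hπ₂.1 _).1 h0 b (Finset.mem_univ b)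
  -- key decomposition identities
  have key₁ : KL π₁ pibar₁ - KL pistar₁ pibar₁ - KL π₁ pistar₁
      = ∑ z : X × V, (μ z - μstar z) * (Real.log (μstar z) - Real.log (m₁ z)) := by
    have hterm : ∀ p : (X × V) × (X × V),
        π₁ p * Real.log (π₁ p / pibar₁ p) - pistar₁ p * Real.log (pistar₁ p / pibar₁ p)
          - π₁ p * Real.log (π₁ p / pistar₁ p)
        = (π₁ p - pistar₁ p) * (Real.log (μstar p.2) - Real.log (m₁ p.2)) := by
      intro p
      rw [hpistar₁]
      exact decomp_point (π₁ p) (pibar₁ p) (μstar p.2) (m₁ p.2) (hπ₁.1 p) (h₁pos p)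
        (hμnn p.2) (hm₁pos p.2) (fun h => hπ₁zero p ((hμzero p.2).1 h))
    calc KL π₁ pibar₁ - KL pistar₁ pibar₁ - KL π₁ pistar₁
        = ∑ p : (X × V) × (X × V), (π₁ p * Real.log (π₁ p / pibar₁ p)
            - pistar₁ p * Real.log (pistar₁ p / pibar₁ p)
            - π₁ p * Real.log (π₁ p / pistar₁ p)) := by
          rw [KL, KL, KL, ← Finset.sum_sub_distrib, ← Finset.sum_sub_distrib]
      _ = ∑ p : (X × V) × (X × V),
            (π₁ p - pistar₁ p) * (Real.log (μstar p.2) - Real.log (m₁ p.2)) :=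
          Finset.sum_congr rfl fun p _ => hterm p
      _ = ∑ z : X × V, ∑ z' : X × V,
            (π₁ (z', z) - pistar₁ (z', z)) * (Real.log (μstar z) - Real.log (m₁ z)) := by
          rw [Fintype.sum_prod_type, Finset.sum_comm]
      _ = ∑ z : X × V, (μ z - μstar z) * (Real.log (μstar z) - Real.log (m₁ z)) := by
          refine Finset.sum_congr rfl fun z _ => ?_
          rw [← Finset.sum_mul, Finset.sum_sub_distrib, (hmarg z).1, hstar₁marg z]
  have key₂ : KL π₂ pibar₂ - KL pistar₂ pibar₂ - KL π₂ pistar₂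
      = ∑ z : X × V, (μ z - μstar z) * (Real.log (μstar z) - Real.log (m₂ z)) := by
    have hterm : ∀ p : (X × V) × (X × V),
        π₂ p * Real.log (π₂ p / pibar₂ p) - pistar₂ p * Real.log (pistar₂ p / pibar₂ p)
          - π₂ p * Real.log (π₂ p / pistar₂ p)
        = (π₂ p - pistar₂ p) * (Real.log (μstar p.1) - Real.log (m₂ p.1)) := by
      intro p
      rw [hpistar₂]
      exact decomp_point (π₂ p) (pibar₂ p) (μstar p.1) (m₂ p.1) (hπ₂.1 p) (h₂pos p)
        (hμnn p.1) (hm₂pos p.1) (fun h => hπ₂zero p ((hμzero p.1).1 h))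
    calc KL π₂ pibar₂ - KL pistar₂ pibar₂ - KL π₂ pistar₂
        = ∑ p : (X × V) × (X × V), (π₂ p * Real.log (π₂ p / pibar₂ p)
            - pistar₂ p * Real.log (pistar₂ p / pibar₂ p)
            - π₂ p * Real.log (π₂ p / pistar₂ p)) := by
          rw [KL, KL, KL, ← Finset.sum_sub_distrib, ← Finset.sum_sub_distrib]
      _ = ∑ p : (X × V) × (X × V),
            (π₂ p - pistar₂ p) * (Real.log (μstar p.1) - Real.log (m₂ p.1)) :=
          Finset.sum_congr rfl fun p _ => hterm p
      _ = ∑ z : X × V, ∑ z' : X × V,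
            (π₂ (z, z') - pistar₂ (z, z')) * (Real.log (μstar z) - Real.log (m₂ z)) := by
          rw [Fintype.sum_prod_type]
      _ = ∑ z : X × V, (μ z - μstar z) * (Real.log (μstar z) - Real.log (m₂ z)) := by
          refine Finset.sum_congr rfl fun z _ => ?_
          rw [← Finset.sum_mul, Finset.sum_sub_distrib, (hmarg z).2, hstar₂marg z]
  -- the cross terms sum to zero
  have key₃ : (∑ z : X × V, (μ z - μstar z) * (Real.log (μstar z) - Real.log (m₁ z)))
      + (∑ z : X × V, (μ z - μstar z) * (Real.log (μstar z) - Real.log (m₂ z))) = 0 := by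
    have hcomb : ∀ z : X × V,
        (μ z - μstar z) * (Real.log (μstar z) - Real.log (m₁ z))
          + (μ z - μstar z) * (Real.log (μstar z) - Real.log (m₂ z))
        = (μ z - μstar z) * (2 * (Real.log (ρ z.1) - Real.log (∑ v' : V, G (z.1, v')))) := by
      intro z
      rcases eq_or_ne (ρ z.1) 0 with hx | hx
      · rw [hμzero' z hx, (hμzero z).2 hx, sub_self, zero_mul, zero_mul, zero_mul, add_zero]
      · have hρpos : 0 < ρ z.1 := lt_of_le_of_ne (hρ.1 z.1) (Ne.symm hx)
        have hlogμ : Real.log (μstar z)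
            = Real.log (ρ z.1) + Real.log (G z) - Real.log (∑ v' : V, G (z.1, v')) := by
          rw [hμstar]
          simp only
          rw [Real.log_div (mul_pos hρpos (hGpos z)).ne' (hSpos z.1).ne', Real.log_mul hx (hGpos z).ne']
        have hlogG : Real.log (G z) = (Real.log (m₁ z) + Real.log (m₂ z)) / 2 := by
          rw [hG]
          simp only
          rw [Real.log_sqrt (mul_pos (hm₁pos z) (hm₂pos z)).le, Real.log_mul (hm₁pos z).ne' (hm₂pos z).ne']
        rw [hlogμ, hlogG]; ring
    calc (∑ z : X × V, (μ z - μstar z) * (Real.log (μstar z) - Real.log (m₁ z)))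
        + (∑ z : X × V, (μ z - μstar z) * (Real.log (μstar z) - Real.log (m₂ z)))
        = ∑ z : X × V, (μ z - μstar z)
            * (2 * (Real.log (ρ z.1) - Real.log (∑ v' : V, G (z.1, v')))) := by
          rw [← Finset.sum_add_distrib]
          exact Finset.sum_congr rfl fun z _ => hcomb z
      _ = ∑ x : X, (∑ v : V, (μ (x, v) - μstar (x, v)))
            * (2 * (Real.log (ρ x) - Real.log (∑ v' : V, G (x, v')))) := by
          rw [Fintype.sum_prod_type]
          exact Finset.sum_congr rfl fun x _ => by rw [Finset.sum_mul]
      _ = 0 := by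
          apply Finset.sum_eq_zero
          intro x _
          rw [Finset.sum_sub_distrib, hrow x, hμrow x, sub_self, zero_mul]
  -- Gibbs inequalities
  have g₁ := gibbs π₁ pistar₁ hπ₁.1 hstar₁dens.1
    (fun p hp => by
      apply hπ₁zero p
      rw [hpistar₁] at hp
      simp only [div_eq_zero_iff, mul_eq_zero] at hp
      rcases hp with (h | h) | h
      · exact absurd h (h₁pos p).ne'
      · exact (hμzero p.2).1 h
      · exact absurd h (hm₁pos p.2).ne')
    (by rw [hπ₁.2, hstar₁dens.2])
  have g₂ := gibbs π₂ pistar₂ hπ₂.1 hstar₂dens.1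
    (fun p hp => by
      apply hπ₂zero p
      rw [hpistar₂] at hp
      simp only [div_eq_zero_iff, mul_eq_zero] at hp
      rcases hp with (h | h) | h
      · exact absurd h (h₂pos p).ne'
      · exact (hμzero p.1).1 h
      · exact absurd h (hm₂pos p.1).ne')
    (by rw [hπ₂.2, hstar₂dens.2])
  have hdiff : KL π₁ pibar₁ + KL π₂ pibar₂ - (KL pistar₁ pibar₁ + KL pistar₂ pibar₂)
      = KL π₁ pistar₁ + KL π₂ pistar₂ := by linarith [key₁, key₂, key₃]
  constructor
  · linarith [g₁.1, g₂.1]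
  · constructor
    · intro h
      have hz : KL π₁ pistar₁ + KL π₂ pistar₂ = 0 := by linarith
      have h1 : KL π₁ pistar₁ = 0 := by linarith [g₁.1, g₂.1]
      have h2 : KL π₂ pistar₂ = 0 := by linarith [g₁.1, g₂.1]
      exact ⟨g₁.2.1 h1, g₂.2.1 h2⟩
    · rintro ⟨rfl, rfl⟩
      ring
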